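/- Let W be a Jacobson scheme and let Z ⊆ W be a subset equipped with the subspace topology. Assume that for every point p ∈ Z which is closed in W one has dim_p Z < dim_p W, where dim_p denotes the local dimension at p (the infimum over open neighbourhoods U of p of the topological Krull dimension of U ∩ Z, respectively of U). Then the complement W \ Z is dense in W. -/

import Mathlib

open AlgebraicGeometry

open Order TopologicalSpace Topology in
/-- If `f` is an embedding, then the Krull dimension of `X` is at most that of `Y`. -/
theorem IsEmbedding.topologicalKrullDim_le' {X Y : Type*} [TopologicalSpace X]
    [TopologicalSpace Y] (f : X → Y) (hf : Topology.IsEmbedding f) :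
    topologicalKrullDim X ≤ topologicalKrullDim Y := by
  refine krullDim_le_of_strictMono
    (fun C : IrreducibleCloseds X ↦
      ⟨closure (f '' C), (C.isIrreducible'.image f hf.continuous.continuousOn).closure,
        isClosed_closure⟩) ?_
  intro C D hCD
  have key : ∀ E : IrreducibleCloseds X, (E : Set X) = f ⁻¹' closure (f '' (E : Set X)) := by
    intro E
    have h := hf.closure_eq_preimage_closure_image (E : Set X)
    rwa [show closure (E : Set X) = (E : Set X) from E.isClosed'.closure_eq] at h
  constructor
  · show closure (f '' (C : Set X)) ⊆ closure (f '' (D : Set X))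
    exact closure_mono (Set.image_mono hCD.le)
  · intro hle
    have : closure (f '' (C : Set X)) = closure (f '' (D : Set X)) :=
      le_antisymm (closure_mono (Set.image_mono hCD.le)) hle
    have : (C : Set X) = (D : Set X) := by rw [key C, key D, this]
    exact hCD.ne (IrreducibleCloseds.ext this)

/-- The local dimension at `p` of a subset `S` of a topological space `T`: the infimum,
over open neighbourhoods `U` of `p`, of the topological Krull dimension of `U ∩ S`
(with the subspace topology). -/
noncomputable def localDimAt (T : Type*) [TopologicalSpace T] (S : Set T) (p : T) :
    WithBot ℕ∞ :=
  ⨅ U : {U : Set T // IsOpen U ∧ p ∈ U}, topologicalKrullDim ↥(U.1 ∩ S)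

/-- Let `W` be a Jacobson scheme and `Z ⊆ W` a subset such that for every
point `p ∈ Z` which is closed in `W` we have `dim_p Z < dim_p W`. Then `W \ Z` is dense. -/
theorem dense_compl_of_localDim_lt
    (W : Scheme) [JacobsonSpace W] (Z : Set W)
    (h : ∀ p ∈ Z, IsClosed ({p} : Set W) →
      localDimAt W Z p < localDimAt W Set.univ p) :
    Dense Zᶜ := by
  rw [← interior_eq_empty_iff_dense_compl]
  by_contra hne
  set U := interior Z with hU
  have hUopen : IsOpen U := isOpen_interior
  have hUne : U.Nonempty := Set.nonempty_iff_ne_empty.mpr hne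
  obtain ⟨p, hpU, hpc⟩ := nonempty_inter_closedPoints hUne hUopen.isLocallyClosed
  have hpZ : p ∈ Z := interior_subset hpU
  have hlt := h p hpZ hpc
  refine absurd hlt (not_lt.mpr ?_)
  -- show localDimAt W univ p ≤ localDimAt W Z p
  refine le_iInf fun V ↦ ?_
  obtain ⟨V, hVopen, hpV⟩ := V
  have h1 : localDimAt W Set.univ p ≤ topologicalKrullDim ↥((V ∩ U) ∩ Set.univ) := by
    exact iInf_le (fun U : {U : Set W // IsOpen U ∧ p ∈ U} ↦
      topologicalKrullDim ↥(U.1 ∩ Set.univ)) ⟨V ∩ U, hVopen.inter hUopen, hpV, hpU⟩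
  have h2 : ((V ∩ U) ∩ Set.univ : Set W) = V ∩ U := Set.inter_univ _
  rw [h2] at h1
  refine h1.trans ?_
  have hsub : (V ∩ U : Set W) ⊆ V ∩ Z := Set.inter_subset_inter_right _ interior_subset
  exact IsEmbedding.topologicalKrullDim_le' (Set.inclusion hsub)
    (Topology.IsEmbedding.inclusion hsub)
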